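/- Let μ be a finite complex Borel measure on ℝⁿ (n ≥ 2) with compact support. If the Fourier transform μ̂(ξ) = ∫ e^{−i ξ·x} dμ(x) vanishes for all ξ ∈ ℝⁿ \ {0} and is continuous, and μ̂(0) = μ(ℝⁿ) = 0, then μ = 0. Consequently, if ∫ u₁ u₂ dμ = 0 for all pairs u₁, u₂ of harmonic functions on ℝⁿ (allowing the harmonic exponentials e^{iζ₊·x}, e^{iζ₋·x} with ζ₊ + ζ₋ = ξ and also constants), then μ = 0. -/

import Mathlib

open MeasureTheory

/-- Partial derivative in the `j`-th coordinate direction. -/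
noncomputable def pd {m : ℕ} {E : Type*} [NormedAddCommGroup E] [NormedSpace ℝ E]
    (j : Fin m) (f : (Fin m → ℝ) → E) (x : Fin m → ℝ) : E :=
  fderiv ℝ f x (Pi.single j 1)

/-- A complex-valued function is harmonic on all of `ℝ^m`. -/
def IsHarmC {m : ℕ} (u : (Fin m → ℝ) → ℂ) : Prop :=
  ContDiff ℝ 2 u ∧ ∀ x, ∑ j, pd j (pd j u) x = 0


noncomputable def chF {n : ℕ} (ξ : Fin n → ℝ) : (Fin n → ℝ) → ℂ :=
  fun x => Complex.exp (-Complex.I * ∑ i, (ξ i : ℂ) * (x i : ℂ))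

lemma chF_cont {n : ℕ} (ξ : Fin n → ℝ) : Continuous (chF ξ) := by
  apply Complex.continuous_exp.comp
  apply Continuous.mul continuous_const
  exact continuous_finset_sum _ fun i _ =>
    continuous_const.mul (Complex.continuous_ofReal.comp (continuous_apply i))

noncomputable def cKf {n : ℕ} (K : Set (Fin n → ℝ)) (ξ : Fin n → ℝ) : C(K, ℂ) :=
  ⟨fun y => chF ξ y, (chF_cont ξ).comp continuous_subtype_val⟩

lemma cKf_mul {n : ℕ} (K : Set (Fin n → ℝ)) (ξ ξ' : Fin n → ℝ) :
    cKf K ξ * cKf K ξ' = cKf K (ξ + ξ') := by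
  ext y
  show chF ξ y * chF ξ' y = chF (ξ + ξ') y
  rw [chF, chF, chF, ← Complex.exp_add]
  congr 1
  rw [← mul_add, ← Finset.sum_add_distrib]
  congr 1
  refine Finset.sum_congr rfl fun i _ => ?_
  push_cast [Pi.add_apply]
  ring

lemma cKf_one {n : ℕ} (K : Set (Fin n → ℝ)) : cKf K 0 = 1 := by
  ext y
  simp only [cKf, ContinuousMap.coe_mk, ContinuousMap.one_apply, chF]
  norm_num

lemma cKf_star {n : ℕ} (K : Set (Fin n → ℝ)) (ξ : Fin n → ℝ) :
    star (cKf K ξ) = cKf K (-ξ) := by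
  ext y
  show starRingEnd ℂ (chF ξ y) = chF (-ξ) y
  rw [chF, chF, ← Complex.exp_conj]
  simp only [map_mul, map_sum, map_neg, Complex.conj_I, Complex.conj_ofReal, Pi.neg_apply,
    Complex.ofReal_neg, neg_mul, neg_neg, Finset.sum_neg_distrib, mul_neg]

lemma part1 {n : ℕ} (ν : Measure (Fin n → ℝ)) [IsFiniteMeasure ν]
    (K : Set (Fin n → ℝ)) (hK : IsCompact K) (hνK : ν Kᶜ = 0)
    (w : (Fin n → ℝ) → ℂ) (hw : Integrable w ν)
    (h : ∀ ξ : Fin n → ℝ, ∫ x, chF ξ x * w x ∂ν = 0) :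
    w =ᵐ[ν] 0 := by
  have hKm : MeasurableSet K := hK.isClosed.measurableSet
  have hae : ∀ᵐ x ∂ν, x ∈ K := by
    rw [ae_iff]
    convert hνK using 2
    rfl
  have hres : ν.restrict K = ν := Measure.restrict_eq_self_of_ae_mem hae
  haveI : CompactSpace K := isCompact_iff_compactSpace.mp hK
  set ν' : Measure K := ν.comap Subtype.val with hν'
  have hmap : ν'.map Subtype.val = ν := by
    rw [hν', map_comap_subtype_coe hKm, hres]
  -- transfer of integrals and integrability
  have hIntEq : ∀ f : (Fin n → ℝ) → ℂ, ∫ y : K, f y ∂ν' = ∫ x, f x ∂ν := by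
    intro f
    rw [hν', integral_subtype_comap hKm, hres]
  have hIntble : ∀ f : (Fin n → ℝ) → ℂ, Integrable f ν → Integrable (fun y : K => f y) ν' := by
    intro f hf
    have h1 : Integrable f (ν'.map Subtype.val) ↔ Integrable (f ∘ Subtype.val) ν' :=
      (MeasurableEmbedding.subtype_coe hKm).integrable_map_iff
    rw [hmap] at h1
    exact h1.mp hf
  set wK : K → ℂ := fun y => w y with hwKdef
  have hwK : Integrable wK ν' := hIntble w hw
  have hmul : ∀ f : C(K, ℂ), Integrable (fun y => f y * wK y) ν' := by
    intro f
    exact hwK.bdd_mul (f.continuous.aestronglyMeasurable)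
      (Filter.Eventually.of_forall fun y => f.norm_coe_le_norm y)
  -- the linear functional
  let Λlin : C(K, ℂ) →ₗ[ℂ] ℂ :=
    { toFun := fun f => ∫ y, f y * wK y ∂ν'
      map_add' := by
        intro f g
        simp only [ContinuousMap.add_apply, add_mul]
        exact integral_add (hmul f) (hmul g)
      map_smul' := by
        intro c f
        simp only [ContinuousMap.smul_apply, smul_eq_mul, mul_assoc, RingHom.id_apply]
        rw [integral_const_mul] }
  have hΛbound : ∀ f : C(K, ℂ), ‖Λlin f‖ ≤ (∫ y, ‖wK y‖ ∂ν') * ‖f‖ := by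
    intro f
    calc ‖∫ y, f y * wK y ∂ν'‖ ≤ ∫ y, ‖f y * wK y‖ ∂ν' := norm_integral_le_integral_norm _
    _ ≤ ∫ y, ‖f‖ * ‖wK y‖ ∂ν' := by
        refine integral_mono (hmul f).norm (hwK.norm.const_mul _) fun y => ?_
        rw [norm_mul]
        exact mul_le_mul_of_nonneg_right (f.norm_coe_le_norm y) (norm_nonneg _)
    _ = (∫ y, ‖wK y‖ ∂ν') * ‖f‖ := by rw [integral_const_mul, mul_comm]
  let Λ : C(K, ℂ) →L[ℂ] ℂ := Λlin.mkContinuous _ hΛbound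
  -- characters as elements of C(K, ℂ)
  set cK : (Fin n → ℝ) → C(K, ℂ) := cKf K with hcK
  have hcKV : ∀ ξ, Λ (cK ξ) = 0 := by
    intro ξ
    show ∫ y : K, chF ξ y * w y ∂ν' = 0
    rw [hIntEq (fun x => chF ξ x * w x)]
    exact h ξ
  -- characters form a multiplicative submonoid closed under star
  have hmul_cK : ∀ ξ ξ' : Fin n → ℝ, cK ξ * cK ξ' = cK (ξ + ξ') := cKf_mul K
  have hone : cK 0 = 1 := cKf_one K
  have hstar : ∀ ξ : Fin n → ℝ, star (cK ξ) = cK (-ξ) := cKf_star K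
  set S : Set C(K, ℂ) := Set.range cK with hS
  have hSstar : S ∪ star S = S := by
    have h1 : star S = S := by
      ext f
      rw [Set.mem_star]
      constructor
      · rintro ⟨ξ, hξ⟩
        exact ⟨-ξ, by rw [← hstar, hξ, star_star]⟩
      · rintro ⟨ξ, hξ⟩
        exact ⟨-ξ, by rw [← hξ, hstar]⟩
    rw [h1, Set.union_self]
  let M : Submonoid C(K, ℂ) :=
    { carrier := S
      one_mem' := ⟨0, hone⟩
      mul_mem' := by
        rintro f g ⟨ξ, hξ⟩ ⟨ξ', hξ'⟩
        exact ⟨ξ + ξ', by rw [← hξ, ← hξ', hmul_cK]⟩ }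
  have hMclos : (Submonoid.closure S : Set C(K, ℂ)) = S := by
    have : Submonoid.closure S = M := Submonoid.closure_eq M
    rw [this]
    rfl
  -- every element of the star algebra generated by characters is killed by Λ
  have hAV : ((StarAlgebra.adjoin ℂ S : StarSubalgebra ℂ C(K, ℂ)) : Set C(K, ℂ)) ⊆
      {g | Λlin g = 0} := by
    intro g hg
    have hg2 : g ∈ Submodule.span ℂ ((Submonoid.closure (S ∪ star S) : Submonoid C(K, ℂ)) :
        Set C(K, ℂ)) := by
      rw [← StarAlgebra.adjoin_eq_span]
      exact hg
    rw [hSstar, hMclos] at hg2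
    have hspan : Submodule.span ℂ S ≤ LinearMap.ker Λlin := by
      refine Submodule.span_le.mpr ?_
      rintro f ⟨ξ, hξ⟩
      simp only [SetLike.mem_coe, LinearMap.mem_ker]
      rw [← hξ]
      exact hcKV ξ
    exact hspan hg2
  -- the characters separate points
  have hsep : (StarAlgebra.adjoin ℂ S : StarSubalgebra ℂ C(K, ℂ)).SeparatesPoints := by
    intro x y hxy
    have hxy' : (x : Fin n → ℝ) ≠ (y : Fin n → ℝ) := fun hc => hxy (Subtype.ext hc)
    obtain ⟨j, hj⟩ := Function.ne_iff.mp hxy'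
    set d : ℝ := (x : Fin n → ℝ) j - (y : Fin n → ℝ) j with hd
    have hd0 : d ≠ 0 := sub_ne_zero.mpr hj
    set t : ℝ := Real.pi / d with ht
    set ξ : Fin n → ℝ := fun i => if i = j then t else 0 with hξ
    have hsum : ∀ z : Fin n → ℝ, (∑ i, (ξ i : ℂ) * (z i : ℂ)) = (t : ℂ) * (z j : ℂ) := by
      intro z
      rw [Finset.sum_eq_single j]
      · simp [hξ]
      · intro i _ hij
        simp [hξ, hij]
      · simp
    refine ⟨cK ξ, ⟨cK ξ, StarAlgebra.subset_adjoin ℂ S ⟨ξ, rfl⟩, rfl⟩, ?_⟩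
    show chF ξ x ≠ chF ξ y
    intro heq
    rw [chF, chF, hsum, hsum] at heq
    have h2 : Complex.exp (-Complex.I * ((t : ℂ) * ((x : Fin n → ℝ) j : ℂ))
        - -Complex.I * ((t : ℂ) * ((y : Fin n → ℝ) j : ℂ))) = 1 := by
      rw [Complex.exp_sub, heq, div_self (Complex.exp_ne_zero _)]
    have h3 : -Complex.I * ((t : ℂ) * ((x : Fin n → ℝ) j : ℂ))
        - -Complex.I * ((t : ℂ) * ((y : Fin n → ℝ) j : ℂ)) = -((Real.pi : ℂ) * Complex.I) := by
      have : (t : ℂ) * ((x : Fin n → ℝ) j - (y : Fin n → ℝ) j : ℝ) = (Real.pi : ℂ) := by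
        rw [← Complex.ofReal_mul]
        congr 1
        rw [ht]
        field_simp
        exact hd.symm
      push_cast at this ⊢
      linear_combination -Complex.I * this
    rw [h3, Complex.exp_neg, Complex.exp_pi_mul_I] at h2
    norm_num at h2
  have htop : (StarAlgebra.adjoin ℂ S : StarSubalgebra ℂ C(K, ℂ)).topologicalClosure = ⊤ :=
    ContinuousMap.starSubalgebra_topologicalClosure_eq_top_of_separatesPoints _ hsep
  -- hence Λ vanishes on all of C(K, ℂ)
  have hfV : ∀ f : C(K, ℂ), Λlin f = 0 := by
    intro f
    have hmem : f ∈ closure ((StarAlgebra.adjoin ℂ S : StarSubalgebra ℂ C(K, ℂ)) :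
        Set C(K, ℂ)) := by
      have : f ∈ (StarAlgebra.adjoin ℂ S : StarSubalgebra ℂ C(K, ℂ)).topologicalClosure := by
        rw [htop]; trivial
      exact this
    have hVclosed : IsClosed {g : C(K, ℂ) | Λlin g = 0} := by
      have : {g : C(K, ℂ) | Λlin g = 0} = Λ ⁻¹' {0} := rfl
      rw [this]
      exact isClosed_singleton.preimage Λ.continuous
    exact closure_minimal hAV hVclosed hmem
  -- conclude
  have hfin := ae_eq_zero_of_integral_contDiff_smul_eq_zero (μ := ν) (f := w)
    hw.locallyIntegrable ?_
  · filter_upwards [hfin] with x hx using hx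
  · intro g hg _
    have hc : Continuous fun y : K => (g y : ℂ) :=
      Complex.continuous_ofReal.comp (hg.continuous.comp continuous_subtype_val)
    have h1 := hfV ⟨fun y : K => (g y : ℂ), hc⟩
    have h2 : ∫ y : K, (g (y : Fin n → ℝ) : ℂ) * wK y ∂ν' = 0 := h1
    rw [hIntEq (fun x => (g x : ℂ) * w x)] at h2
    rw [show (fun x => g x • w x) = fun x => (g x : ℂ) * w x from
      funext fun x => Complex.real_smul]
    exact h2


lemma exists_unit_orth {n : ℕ} (hn : 2 ≤ n) (ξ : Fin n → ℝ) :
    ∃ v : Fin n → ℝ, (∑ j, v j ^ 2 = 1) ∧ (∑ j, ξ j * v j = 0) := by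
  haveI : NeZero n := ⟨by omega⟩
  by_cases hξ : ξ = 0
  · refine ⟨Pi.single ⟨0, by omega⟩ 1, ?_, ?_⟩
    · rw [Finset.sum_eq_single ⟨0, by omega⟩]
      · simp
      · intro i _ hi; simpa [Pi.single_apply] using hi
      · simp
    · simp [hξ]
  · obtain ⟨i, hi⟩ := Function.ne_iff.mp hξ
    simp only [Pi.zero_apply] at hi
    haveI : Nontrivial (Fin n) := Fin.nontrivial_iff_two_le.mpr hn
    obtain ⟨k, hk⟩ := exists_ne i
    set v' : Fin n → ℝ := fun m => if m = k then ξ i else if m = i then -(ξ k) else 0 with hv'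
    have hpair : ∀ g : Fin n → ℝ, (∀ m, m ≠ i → m ≠ k → g m = 0) → ∑ j, g j = g i + g k := by
      intro g hg
      rw [← Finset.sum_subset (Finset.subset_univ {i, k})]
      · exact Finset.sum_pair (Ne.symm hk)
      · intro m _ hm
        simp only [Finset.mem_insert, Finset.mem_singleton, not_or] at hm
        exact hg m hm.1 hm.2
    have hvi : v' i = -(ξ k) := by simp [hv', Ne.symm hk]
    have hvk : v' k = ξ i := by simp [hv']
    have hs : ∑ j, v' j ^ 2 = ξ k ^ 2 + ξ i ^ 2 := by
      rw [hpair (fun j => v' j ^ 2) (fun m hmi hmk => by simp [hv', hmi, hmk]), hvi, hvk]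
      ring
    have horth : ∑ j, ξ j * v' j = 0 := by
      rw [hpair (fun j => ξ j * v' j) (fun m hmi hmk => by simp [hv', hmi, hmk]), hvi, hvk]
      ring
    have hspos : (0 : ℝ) < ξ k ^ 2 + ξ i ^ 2 := by positivity
    set c : ℝ := Real.sqrt (ξ k ^ 2 + ξ i ^ 2) with hc
    have hcpos : 0 < c := Real.sqrt_pos.mpr hspos
    refine ⟨fun j => v' j / c, ?_, ?_⟩
    · have : ∀ j, (v' j / c) ^ 2 = v' j ^ 2 / (ξ k ^ 2 + ξ i ^ 2) := by
        intro j
        rw [div_pow, hc, Real.sq_sqrt hspos.le]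
      rw [Finset.sum_congr rfl fun j _ => this j, ← Finset.sum_div, hs, div_self hspos.ne']
    · have : ∀ j, ξ j * (v' j / c) = (ξ j * v' j) / c := fun j => by ring
      rw [Finset.sum_congr rfl fun j _ => this j, ← Finset.sum_div, horth, zero_div]

open MeasureTheory Complex

noncomputable def expLin {n : ℕ} (a : Fin n → ℂ) : (Fin n → ℝ) →L[ℝ] ℂ :=
  ∑ j, a j • (Complex.ofRealCLM.comp (ContinuousLinearMap.proj j))

lemma expLin_apply {n : ℕ} (a : Fin n → ℂ) (x : Fin n → ℝ) :
    expLin a x = ∑ j, a j * (x j : ℂ) := by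
  simp [expLin, ContinuousLinearMap.sum_apply]

lemma expLin_single {n : ℕ} (a : Fin n → ℂ) (j : Fin n) :
    expLin a (Pi.single j 1) = a j := by
  rw [expLin_apply]
  rw [Finset.sum_eq_single j]
  · simp
  · intro i _ hij
    simp [Pi.single_apply, hij]
  · simp


lemma harm_exp_aux {n : ℕ} (a : Fin n → ℂ) (j : Fin n) :
    (pd j fun x => Complex.exp (expLin a x)) = fun x => a j * Complex.exp (expLin a x) := by
  funext x
  have h : HasFDerivAt (fun x => Complex.exp (expLin a x))
      (Complex.exp (expLin a x) • expLin a) x := ((expLin a).hasFDerivAt).cexp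
  rw [pd, h.fderiv]
  simp [expLin_single, mul_comm]


lemma harm_exp {n : ℕ} (a : Fin n → ℂ) (ha : ∑ j, a j ^ 2 = 0) :
    IsHarmC (fun x : Fin n → ℝ => Complex.exp (expLin a x)) := by
  constructor
  · exact Complex.contDiff_exp.comp (expLin a).contDiff
  · intro x
    have hdiff : Differentiable ℝ (fun x : Fin n → ℝ => Complex.exp (expLin a x)) :=
      fun y => (((expLin a).hasFDerivAt (x := y)).cexp).differentiableAt
    have h2 : ∀ j, pd j (pd j fun x => Complex.exp (expLin a x)) x
        = a j ^ 2 * Complex.exp (expLin a x) := by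
      intro j
      have : (pd j fun x => Complex.exp (expLin a x))
          = fun x => a j * Complex.exp (expLin a x) := harm_exp_aux a j
      rw [this]
      unfold pd
      rw [fderiv_const_mul (hdiff x)]
      have := harm_exp_aux a j
      unfold pd at this
      have h3 : fderiv ℝ (fun x => Complex.exp (expLin a x)) x (Pi.single j 1)
          = a j * Complex.exp (expLin a x) := congrFun this x
      simp only [ContinuousLinearMap.smul_apply, h3, smul_eq_mul]
      ring
    rw [Finset.sum_congr rfl (fun j _ => h2 j), ← Finset.sum_mul, ha, zero_mul]

lemma sum_sq_zero {n : ℕ} (ξ v : Fin n → ℝ) (hv1 : ∑ j, v j ^ 2 = 1)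
    (hv2 : ∑ j, ξ j * v j = 0) (s : ℝ) (hs : s ^ 2 = 1) :
    ∑ j, ((-Complex.I * (ξ j : ℂ) + (s : ℂ) * (Real.sqrt (∑ j, ξ j ^ 2) : ℂ) * (v j : ℂ)) / 2)
      ^ 2 = 0 := by
  set r : ℝ := Real.sqrt (∑ j, ξ j ^ 2) with hr
  have hterm : ∀ j, ((-Complex.I * (ξ j : ℂ) + (s : ℂ) * (r : ℂ) * (v j : ℂ)) / 2) ^ 2
      = (-((ξ j : ℂ) ^ 2) + (s : ℂ) ^ 2 * (r : ℂ) ^ 2 * ((v j : ℂ)) ^ 2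
          - 2 * Complex.I * (s : ℂ) * (r : ℂ) * ((ξ j : ℂ) * (v j : ℂ))) / 4 := by
    intro j
    linear_combination ((ξ j : ℂ) ^ 2 / 4) * Complex.I_sq
  rw [Finset.sum_congr rfl fun j _ => hterm j]
  rw [← Finset.sum_div]
  have hsplit : ∑ j, (-((ξ j : ℂ) ^ 2) + (s : ℂ) ^ 2 * (r : ℂ) ^ 2 * ((v j : ℂ)) ^ 2
      - 2 * Complex.I * (s : ℂ) * (r : ℂ) * ((ξ j : ℂ) * (v j : ℂ)))
      = -(∑ j, (ξ j : ℂ) ^ 2) + (s : ℂ) ^ 2 * (r : ℂ) ^ 2 * (∑ j, ((v j : ℂ)) ^ 2)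
        - 2 * Complex.I * (s : ℂ) * (r : ℂ) * (∑ j, (ξ j : ℂ) * (v j : ℂ)) := by
    rw [Finset.sum_sub_distrib, Finset.sum_add_distrib, ← Finset.sum_neg_distrib,
      ← Finset.mul_sum, ← Finset.mul_sum]
  rw [hsplit]
  have hv1c : (∑ j, ((v j : ℂ)) ^ 2) = 1 := by exact_mod_cast congrArg Complex.ofReal hv1
  have hv2c : (∑ j, (ξ j : ℂ) * (v j : ℂ)) = 0 := by exact_mod_cast congrArg Complex.ofReal hv2
  have hsc : ((s : ℂ)) ^ 2 = 1 := by exact_mod_cast congrArg Complex.ofReal hs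
  have hrc : ((r : ℂ)) ^ 2 = ∑ j, (ξ j : ℂ) ^ 2 := by
    have : r ^ 2 = ∑ j, ξ j ^ 2 := Real.sq_sqrt (by positivity)
    exact_mod_cast congrArg Complex.ofReal this
  rw [hv1c, hv2c, hsc, hrc]
  ring

lemma char_eq_harm_prod {n : ℕ} (hn : 2 ≤ n) (ξ : Fin n → ℝ) :
    ∃ u₁ u₂ : (Fin n → ℝ) → ℂ, IsHarmC u₁ ∧ IsHarmC u₂ ∧
      ∀ x, u₁ x * u₂ x = Complex.exp (-Complex.I * ∑ i, (ξ i : ℂ) * (x i : ℂ)) := by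
  obtain ⟨v, hv1, hv2⟩ := exists_unit_orth hn ξ
  set r : ℝ := Real.sqrt (∑ j, ξ j ^ 2) with hr
  set a : ℝ → Fin n → ℂ := fun s j =>
    (-Complex.I * (ξ j : ℂ) + (s : ℂ) * (r : ℂ) * (v j : ℂ)) / 2 with ha
  have hharm : ∀ s : ℝ, s ^ 2 = 1 → IsHarmC (fun x => Complex.exp (expLin (a s) x)) :=
    fun s hs => harm_exp (a s) (sum_sq_zero ξ v hv1 hv2 s hs)
  refine ⟨_, _, hharm 1 (by norm_num), hharm (-1) (by norm_num), fun x => ?_⟩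
  rw [← Complex.exp_add, expLin_apply, expLin_apply, ← Finset.sum_add_distrib]
  congr 1
  rw [Finset.mul_sum]
  refine Finset.sum_congr rfl fun j _ => ?_
  rw [ha]
  push_cast
  ring

/-- A finite complex measure is represented as `w dν` with `ν` a finite positive measure
and `w` an integrable complex density (Radon–Nikodym). -/
theorem stmt15 (n : ℕ) (hn : 2 ≤ n) (ν : Measure (Fin n → ℝ)) [IsFiniteMeasure ν]
    (K : Set (Fin n → ℝ)) (hK : IsCompact K) (hνK : ν Kᶜ = 0)
    (w : (Fin n → ℝ) → ℂ) (hw : Integrable w ν) :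
    ((∀ ξ : Fin n → ℝ,
        ∫ x, Complex.exp (-Complex.I * ∑ i, (ξ i : ℂ) * (x i : ℂ)) * w x ∂ν = 0) →
      w =ᵐ[ν] 0)
    ∧ ((∀ u₁ u₂ : (Fin n → ℝ) → ℂ, IsHarmC u₁ → IsHarmC u₂ →
        ∫ x, u₁ x * u₂ x * w x ∂ν = 0) →
      w =ᵐ[ν] 0) := by
  constructor
  · intro h1
    exact part1 ν K hK hνK w hw h1
  · intro h2
    refine part1 ν K hK hνK w hw fun ξ => ?_
    obtain ⟨u₁, u₂, hu₁, hu₂, hprod⟩ := char_eq_harm_prod hn ξ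
    have h3 := h2 u₁ u₂ hu₁ hu₂
    calc ∫ x, chF ξ x * w x ∂ν = ∫ x, u₁ x * u₂ x * w x ∂ν := by
          refine integral_congr_ae (Filter.Eventually.of_forall fun x => ?_)
          show chF ξ x * w x = u₁ x * u₂ x * w x
          rw [show chF ξ x = u₁ x * u₂ x from (hprod x).symm]
    _ = 0 := h3
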